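/- (Myhill-Nerode with advice, easy direction) If L ⊆ Σ* is regular with advice, then there exists k ∈ ℕ such that for every n ≥ 0, the relation ≡_{L,n} (the Myhill-Nerode congruence of L restricted to Σⁿ) has at most k equivalence classes. -/

import Mathlib

open Classical

/-- The run of an automaton with advice. -/
def advRun {Q S Γ : Type*} (δ : Q → Γ → S → Q) (A : ℕ → Γ) : Q → ℕ → List S → Q
  | q, _, [] => q
  | q, n, a :: w => advRun δ A (δ q (A n) a) (n + 1) w

/-- The language accepted by an automaton with advice. -/
def advAccepts {Q S Γ : Type*} (δ : Q → Γ → S → Q) (A : ℕ → Γ) (q0 : Q) (F : Set Q) :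
    Set (List S) :=
  {w | advRun δ A q0 0 w ∈ F}

/-- `L` is regular with (some) advice. -/
def RegularWithSomeAdvice {S : Type*} (L : Set (List S)) : Prop :=
  ∃ (Γ : Type) (_ : Fintype Γ) (A : ℕ → Γ) (Q : Type) (_ : Fintype Q)
    (δ : Q → Γ → S → Q) (q0 : Q) (F : Set Q), advAccepts δ A q0 F = L

/-- The Myhill-Nerode congruence of a language `L`. -/
def NerodeEq {S : Type*} (L : Set (List S)) (x y : List S) : Prop :=
  ∀ z : List S, x ++ z ∈ L ↔ y ++ z ∈ L

/-- `≡_{L,n}` has at most `k` equivalence classes: there are at most `k`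
representatives of length `n` covering all strings of length `n`. -/
def NerodeClassesLe {S : Type*} (L : Set (List S)) (n k : ℕ) : Prop :=
  ∃ R : Finset (List S), R.card ≤ k ∧ (∀ y ∈ R, y.length = n) ∧
    ∀ x : List S, x.length = n → ∃ y ∈ R, NerodeEq L x y


lemma advRun_append {Q S Γ : Type*} (δ : Q → Γ → S → Q) (A : ℕ → Γ)
    (w : List S) : ∀ (q : Q) (n : ℕ) (z : List S),
    advRun δ A q n (w ++ z) = advRun δ A (advRun δ A q n w) (n + w.length) z := by
  induction w with
  | nil => intro q n z; simp [advRun]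
  | cons a w ih =>
    intro q n z
    simp only [List.cons_append, advRun, List.length_cons]
    rw [ih, show n + 1 + w.length = n + (w.length + 1) from by omega]

/-- Easy direction of Myhill-Nerode with advice: a language regular with advice
has a uniform bound on the number of classes of `≡_{L,n}`. -/
theorem regular_with_advice_implies_bounded_nerode {S : Type*} (L : Set (List S))
    (h : RegularWithSomeAdvice L) :
    ∃ k : ℕ, ∀ n : ℕ, NerodeClassesLe L n k := by
  obtain ⟨Γ, _, A, Q, _, δ, q0, F, hacc⟩ := h
  refine ⟨Fintype.card Q, fun n => ?_⟩
  classical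
  set P : Q → Prop := fun q => ∃ x : List S, x.length = n ∧ advRun δ A q0 0 x = q with hP
  set rep : Q → List S := fun q => if hq : P q then hq.choose else [] with hrep
  refine ⟨(Finset.univ.filter P).image rep, ?_, ?_, ?_⟩
  · exact le_trans Finset.card_image_le (le_trans (Finset.card_filter_le _ _) (le_of_eq (Finset.card_univ)))
  · intro y hy
    obtain ⟨q, hq, rfl⟩ := Finset.mem_image.mp hy
    have hq' : P q := (Finset.mem_filter.mp hq).2
    simp only [hrep, dif_pos hq']
    exact hq'.choose_spec.1
  · intro x hx
    have hq' : P (advRun δ A q0 0 x) := ⟨x, hx, rfl⟩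
    refine ⟨rep (advRun δ A q0 0 x), Finset.mem_image.mpr ⟨_, Finset.mem_filter.mpr ⟨Finset.mem_univ _, hq'⟩, rfl⟩, ?_⟩
    intro z
    have hy := hq'.choose_spec
    have h1 : rep (advRun δ A q0 0 x) = hq'.choose := dif_pos hq'
    rw [← hacc]
    simp only [advAccepts, Set.mem_setOf_eq, advRun_append, h1, hy.1, hy.2, hx]
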